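/- Let μ > 0, positive weights λ₀,…,λ_{T−1} and stepsizes α_k = λ_k/(μ ∑_{i=0}^k λ_i). Define φ(λ_T) = (∑_{k=0}^{T} λ_k α_k)/(∑_{k=0}^{T} λ_k), where α_T = λ_T/(μ∑_{k=0}^T λ_k) is implied. Then λ_T = (∑_{k=0}^{T−1} λ_k · ∑_{k=0}^{T−1} λ_k α_k)/(∑_{k=0}^{T−1} λ_k (2/μ − α_k)) is the unique positive critical point of φ, i.e., the unique λ_T > 0 with dφ/dλ_T = 0. -/

import Mathlib

/-- The greedily optimal next dual weight `λ_T` from \eqref{eq:optimal-lambda}: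
it is the unique positive critical point of
`φ(t) = (∑_{k<T} λ_k α_k + t²/(μ(S+t)))/(S+t)` where `S = ∑_{k<T} λ_k`. -/
theorem stmt_13 (μ : ℝ) (hμ : 0 < μ) (T : ℕ) (hT : 1 ≤ T)
    (lam α : ℕ → ℝ) (hlam : ∀ k, k < T → 0 < lam k)
    (hα : ∀ k, k < T → α k = lam k / (μ * ∑ i ∈ Finset.range (k + 1), lam i))
    (hαle : ∀ k, k < T → α k ≤ 1 / μ)
    (φ : ℝ → ℝ)
    (hφ : ∀ t, φ t =
      ((∑ k ∈ Finset.range T, lam k * α k) +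
          t ^ 2 / (μ * ((∑ k ∈ Finset.range T, lam k) + t))) /
        ((∑ k ∈ Finset.range T, lam k) + t)) :
    ∀ t : ℝ, 0 < t →
      (deriv φ t = 0 ↔
        t = ((∑ k ∈ Finset.range T, lam k) * (∑ k ∈ Finset.range T, lam k * α k)) /
            (∑ k ∈ Finset.range T, lam k * (2 / μ - α k))) := by
  intro t ht
  set S := ∑ k ∈ Finset.range T, lam k with hSdef
  set A := ∑ k ∈ Finset.range T, lam k * α k with hAdef
  have hS : 0 < S := Finset.sum_pos (fun k hk => hlam k (Finset.mem_range.mp hk))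
    (by simp [Finset.nonempty_range_iff]; omega)
  have hA : 0 < A := by
    refine Finset.sum_pos (fun k hk => ?_) (by simp [Finset.nonempty_range_iff]; omega)
    have hk := Finset.mem_range.mp hk
    have hα' : 0 < α k := by
      rw [hα k hk]
      apply div_pos (hlam k hk)
      apply mul_pos hμ
      exact Finset.sum_pos (fun i hi => hlam i (lt_of_lt_of_le (Finset.mem_range.mp hi)
        (by omega))) (by simp)
    exact mul_pos (hlam k hk) hα'
  -- sum identity for the denominator of the RHS
  have hB : (∑ k ∈ Finset.range T, lam k * (2 / μ - α k)) = 2 / μ * S - A := by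
    rw [hSdef, hAdef, Finset.mul_sum, ← Finset.sum_sub_distrib]
    apply Finset.sum_congr rfl
    intro k _; ring
  have hBpos : 0 < 2 / μ * S - A := by
    rw [← hB]
    refine Finset.sum_pos (fun k hk => ?_) (by simp [Finset.nonempty_range_iff]; omega)
    have hk := Finset.mem_range.mp hk
    have h1 : α k ≤ 1 / μ := hαle k hk
    have h2 : 0 < 2 / μ - α k := by
      have h0 : 0 < 1 / μ := by positivity
      have he : 2 / μ = 2 * (1 / μ) := by ring
      linarith
    exact mul_pos (hlam k hk) h2
  have hst : 0 < S + t := by linarith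
  have hst' : S + t ≠ 0 := ne_of_gt hst
  have hμ' : μ ≠ 0 := ne_of_gt hμ
  have hμst : μ * (S + t) ≠ 0 := mul_ne_zero hμ' hst'
  -- compute the derivative
  have hD : HasDerivAt φ ((2 * t * S / μ - A * (S + t)) / (S + t) ^ 3) t := by
    have h1 : HasDerivAt (fun x : ℝ => S + x) 1 t := (hasDerivAt_id t).const_add S
    have h2 : HasDerivAt (fun x : ℝ => μ * (S + x)) (μ * 1) t := h1.const_mul μ
    have h3 : HasDerivAt (fun x : ℝ => x ^ 2) (2 * t) t := by
      simpa using hasDerivAt_pow 2 t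
    have h4 := h3.div h2 hμst
    have h5 := (h4.const_add A).div h1 hst'
    have hφfun : φ = fun x : ℝ => (A + x ^ 2 / (μ * (S + x))) / (S + x) := funext hφ
    rw [hφfun]
    refine h5.congr_deriv ?_
    simp only [Pi.div_apply]
    field_simp
    ring
  rw [hD.deriv]
  rw [div_eq_zero_iff]
  have h3pos : (S + t) ^ 3 ≠ 0 := by positivity
  constructor
  · rintro (h | h)
    · rw [eq_div_iff (by rw [hB]; exact ne_of_gt hBpos), hB]
      rw [sub_eq_zero, div_eq_iff hμ'] at h
      field_simp
      linear_combination h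
    · exact absurd h h3pos
  · intro h
    left
    rw [eq_div_iff (by rw [hB]; exact ne_of_gt hBpos), hB] at h
    field_simp at h
    rw [sub_eq_zero, div_eq_iff hμ']
    linear_combination h
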